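/- Let μ₁, μ ∈ (0,1) with μ < μ₁, and let V be a real number satisfying (μ₁ − μ) − (μ₁ − μ)² ≤ V ≤ μ₁ + μ − μ₁² − μ². Define b := (V − (μ₁ − μ) + (μ₁ − μ)²) / (2(1 − μ₁)) and a := (μ − b)/(1 − b). Then 0 ≤ b ≤ μ and 0 ≤ a ≤ μ ≤ μ₁. Moreover, if U and W are independent random variables each uniformly distributed on [0,1], and X₁ := 𝟙(U ≤ μ₁), X := 𝟙(U ≤ a or W ≤ b), then X₁ and X are {0,1}-valued with E[X₁] = μ₁, E[X] = a + b − ab = μ, and Var(X₁ − X) = V. -/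

import Mathlib

open MeasureTheory ProbabilityTheory

/-- Construction of a pair of correlated Bernoulli variables with prescribed
means `μ₁ > μ` and prescribed variance `V` of the difference, from two
independent uniform variables `U, W` on `[0,1]`. -/
theorem bernoulli_coupling_construction {Ω : Type*} [MeasurableSpace Ω]
    (P : Measure Ω) [IsProbabilityMeasure P]
    (μ₁ μ : ℝ) (hμ₁ : μ₁ ∈ Set.Ioo (0:ℝ) 1) (hμ : μ ∈ Set.Ioo (0:ℝ) 1)
    (hlt : μ < μ₁)
    (V : ℝ)
    (hV1 : (μ₁ - μ) - (μ₁ - μ) ^ 2 ≤ V)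
    (hV2 : V ≤ μ₁ + μ - μ₁ ^ 2 - μ ^ 2)
    (b a : ℝ)
    (hb : b = (V - (μ₁ - μ) + (μ₁ - μ) ^ 2) / (2 * (1 - μ₁)))
    (ha : a = (μ - b) / (1 - b))
    (U W : Ω → ℝ) (hUmeas : Measurable U) (hWmeas : Measurable W)
    (hUW : IndepFun U W P)
    (hU : Measure.map U P = volume.restrict (Set.Icc (0:ℝ) 1))
    (hW : Measure.map W P = volume.restrict (Set.Icc (0:ℝ) 1))
    (X₁ X : Ω → ℝ)
    (hX₁ : ∀ ω, X₁ ω = if U ω ≤ μ₁ then 1 else 0)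
    (hX : ∀ ω, X ω = if (U ω ≤ a ∨ W ω ≤ b) then 1 else 0) :
    0 ≤ b ∧ b ≤ μ ∧ 0 ≤ a ∧ a ≤ μ ∧ μ ≤ μ₁ ∧
    (∀ ω, X₁ ω = 0 ∨ X₁ ω = 1) ∧ (∀ ω, X ω = 0 ∨ X ω = 1) ∧
    (∫ ω, X₁ ω ∂P) = μ₁ ∧
    (∫ ω, X ω ∂P) = a + b - a * b ∧
    a + b - a * b = μ ∧
    variance (fun ω => X₁ ω - X ω) P = V := by
  classical
  obtain ⟨hμ₁0, hμ₁1⟩ := hμ₁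
  obtain ⟨hμ0, hμ1⟩ := hμ
  have hd : (0:ℝ) < 2 * (1 - μ₁) := by linarith
  -- algebraic facts
  have hb0 : 0 ≤ b := by
    rw [hb]; apply div_nonneg _ hd.le; nlinarith
  have hbμ : b ≤ μ := by
    rw [hb, div_le_iff₀ hd]; nlinarith
  have h1b : (0:ℝ) < 1 - b := by linarith
  have ha0 : 0 ≤ a := by
    rw [ha]; apply div_nonneg _ h1b.le; linarith
  have haμ : a ≤ μ := by
    rw [ha, div_le_iff₀ h1b]; nlinarith
  have habμ : a * (1 - b) = μ - b := by
    rw [ha, div_mul_cancel₀ _ h1b.ne']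
  have hab : a + b - a * b = μ := by nlinarith
  have haμ₁ : a ≤ μ₁ := le_trans haμ hlt.le
  -- probability of {U ≤ c}
  have hprob : ∀ (Y : Ω → ℝ), Measurable Y → Measure.map Y P = volume.restrict (Set.Icc (0:ℝ) 1) →
      ∀ c : ℝ, 0 ≤ c → c ≤ 1 → P (Y ⁻¹' Set.Iic c) = ENNReal.ofReal c := by
    intro Y hYm hYmap c hc0 hc1
    rw [← Measure.map_apply hYm measurableSet_Iic, hYmap,
      Measure.restrict_apply measurableSet_Iic]
    have : Set.Iic c ∩ Set.Icc (0:ℝ) 1 = Set.Icc 0 c := by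
      ext x
      simp only [Set.mem_inter_iff, Set.mem_Iic, Set.mem_Icc]
      constructor
      · rintro ⟨h1, h2, h3⟩; exact ⟨h2, h1⟩
      · rintro ⟨h1, h2⟩; exact ⟨h2, h1, le_trans h2 hc1⟩
    rw [this, Real.volume_Icc, sub_zero]
  set S1 : Set Ω := U ⁻¹' Set.Iic μ₁ with hS1def
  set A : Set Ω := U ⁻¹' Set.Iic a with hAdef
  set B : Set Ω := W ⁻¹' Set.Iic b with hBdef
  have hS1m : MeasurableSet S1 := hUmeas measurableSet_Iic
  have hAm : MeasurableSet A := hUmeas measurableSet_Iic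
  have hBm : MeasurableSet B := hWmeas measurableSet_Iic
  have hPS1 : P S1 = ENNReal.ofReal μ₁ := hprob U hUmeas hU μ₁ hμ₁0.le hμ₁1.le
  have hPA : P A = ENNReal.ofReal a := hprob U hUmeas hU a ha0 (le_trans haμ hμ1.le)
  have hPB : P B = ENNReal.ofReal b := hprob W hWmeas hW b hb0 (le_trans hbμ hμ1.le)
  have hPAB : P (A ∩ B) = ENNReal.ofReal (a * b) := by
    rw [hUW.measure_inter_preimage_eq_mul _ _ measurableSet_Iic measurableSet_Iic,
      hPA, hPB, ← ENNReal.ofReal_mul ha0]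
  have hPS1B : P (S1 ∩ B) = ENNReal.ofReal (μ₁ * b) := by
    rw [hUW.measure_inter_preimage_eq_mul _ _ measurableSet_Iic measurableSet_Iic,
      hPS1, hPB, ← ENNReal.ofReal_mul hμ₁0.le]
  -- X₁ and X as indicators
  have hX₁ind : X₁ = S1.indicator (fun _ => (1:ℝ)) := by
    funext ω; rw [hX₁ ω, Set.indicator_apply]; rfl
  have hXind : X = (A ∪ B).indicator (fun _ => (1:ℝ)) := by
    funext ω; rw [hX ω, Set.indicator_apply]
    simp [hAdef, hBdef]
  have hX₁meas : Measurable X₁ := by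
    rw [hX₁ind]; exact (measurable_const.indicator hS1m)
  have hXmeas : Measurable X := by
    rw [hXind]; exact (measurable_const.indicator (hAm.union hBm))
  have hX₁01 : ∀ ω, X₁ ω = 0 ∨ X₁ ω = 1 := by
    intro ω; rw [hX₁ ω]; by_cases h : U ω ≤ μ₁ <;> simp [h]
  have hX01 : ∀ ω, X ω = 0 ∨ X ω = 1 := by
    intro ω; rw [hX ω]; by_cases h : U ω ≤ a ∨ W ω ≤ b <;> simp [h]
  -- integrals
  have hintX₁ : (∫ ω, X₁ ω ∂P) = μ₁ := by
    rw [hX₁ind, integral_indicator_const _ hS1m, measureReal_def, hPS1, smul_eq_mul, mul_one,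
      ENNReal.toReal_ofReal hμ₁0.le]
  -- P(A ∪ B)
  have hPunion : (P (A ∪ B)).toReal = a + b - a * b := by
    have h := measure_union_add_inter (μ := P) A hBm
    rw [hPAB, hPA, hPB] at h
    have h1 : P (A ∪ B) ≠ ⊤ := measure_ne_top _ _
    have h2 := congrArg ENNReal.toReal h
    rw [ENNReal.toReal_add h1 (by simp), ENNReal.toReal_add (by simp) (by simp),
      ENNReal.toReal_ofReal (mul_nonneg ha0 hb0), ENNReal.toReal_ofReal ha0,
      ENNReal.toReal_ofReal hb0] at h2
    linarith
  have hintX : (∫ ω, X ω ∂P) = a + b - a * b := by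
    rw [hXind, integral_indicator_const _ (hAm.union hBm), measureReal_def, smul_eq_mul, mul_one, hPunion]
  -- intersection S1 ∩ (A ∪ B)
  have hsub : A ⊆ S1 := fun ω h => le_trans h haμ₁
  have hinter : S1 ∩ (A ∪ B) = A ∪ (S1 ∩ B) := by
    ext ω
    simp only [Set.mem_inter_iff, Set.mem_union]
    constructor
    · rintro ⟨h1, h2 | h2⟩
      · exact Or.inl h2
      · exact Or.inr ⟨h1, h2⟩
    · rintro (h | ⟨h1, h2⟩)
      · exact ⟨hsub h, Or.inl h⟩
      · exact ⟨h1, Or.inr h2⟩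
  have hPinter : (P (S1 ∩ (A ∪ B))).toReal = a + μ₁ * b - a * b := by
    rw [hinter]
    have h := measure_union_add_inter (μ := P) A (hS1m.inter hBm)
    have hAIB : A ∩ (S1 ∩ B) = A ∩ B := by
      ext ω
      simp only [Set.mem_inter_iff]
      exact ⟨fun ⟨h1, _, h3⟩ => ⟨h1, h3⟩, fun ⟨h1, h3⟩ => ⟨h1, hsub h1, h3⟩⟩
    rw [hAIB, hPAB, hPA, hPS1B] at h
    have h2 := congrArg ENNReal.toReal h
    rw [ENNReal.toReal_add (measure_ne_top _ _) (by simp), ENNReal.toReal_add (by simp) (by simp),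
      ENNReal.toReal_ofReal (mul_nonneg ha0 hb0), ENNReal.toReal_ofReal ha0,
      ENNReal.toReal_ofReal (mul_nonneg hμ₁0.le hb0)] at h2
    linarith
  have hintX₁X : (∫ ω, X₁ ω * X ω ∂P) = a + μ₁ * b - a * b := by
    have : (fun ω => X₁ ω * X ω) = (S1 ∩ (A ∪ B)).indicator (fun _ => (1:ℝ)) := by
      funext ω
      rw [hX₁ind, hXind]
      by_cases h1 : ω ∈ S1 <;> by_cases h2 : ω ∈ A ∪ B <;>
        simp [Set.indicator_apply, h1, h2]
    rw [this, integral_indicator_const _ (hS1m.inter (hAm.union hBm)), measureReal_def, smul_eq_mul, mul_one,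
      hPinter]
  -- integrability
  have hintgX₁ : Integrable X₁ P := by
    refine (MemLp.of_bound hX₁meas.aestronglyMeasurable 1 ?_).integrable le_rfl
    filter_upwards with ω
    rcases hX₁01 ω with h | h <;> rw [h] <;> norm_num
  have hintgX : Integrable X P := by
    refine (MemLp.of_bound hXmeas.aestronglyMeasurable 1 ?_).integrable le_rfl
    filter_upwards with ω
    rcases hX01 ω with h | h <;> rw [h] <;> norm_num
  have hintgX₁X : Integrable (fun ω => X₁ ω * X ω) P := by
    refine (MemLp.of_bound (hX₁meas.mul hXmeas).aestronglyMeasurable 1 ?_).integrable le_rfl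
    filter_upwards with ω
    rcases hX₁01 ω with h | h <;> rcases hX01 ω with h' | h' <;> rw [Pi.mul_apply, h, h'] <;> norm_num
  -- variance
  have hmem : MemLp (fun ω => X₁ ω - X ω) 2 P := by
    refine MemLp.of_bound ((hX₁meas.sub hXmeas).aestronglyMeasurable) 2 ?_
    filter_upwards with ω
    rcases hX₁01 ω with h | h <;> rcases hX01 ω with h' | h' <;> rw [h, h'] <;> norm_num
  have hvar : variance (fun ω => X₁ ω - X ω) P
      = (∫ ω, (X₁ ω - X ω) ^ 2 ∂P) - (∫ ω, (X₁ ω - X ω) ∂P) ^ 2 := by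
    rw [variance_eq_sub hmem]
    rfl
  have hintD : (∫ ω, (X₁ ω - X ω) ∂P) = μ₁ - (a + b - a * b) := by
    rw [integral_sub hintgX₁ hintgX, hintX₁, hintX]
  have hsq : ∀ ω, (X₁ ω - X ω) ^ 2 = X₁ ω + X ω - 2 * (X₁ ω * X ω) := by
    intro ω
    rcases hX₁01 ω with h | h <;> rcases hX01 ω with h' | h' <;> rw [h, h'] <;> ring
  have hintD2 : (∫ ω, (X₁ ω - X ω) ^ 2 ∂P)
      = μ₁ + (a + b - a * b) - 2 * (a + μ₁ * b - a * b) := by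
    have : (∫ ω, (X₁ ω - X ω) ^ 2 ∂P)
        = ∫ ω, (X₁ ω + X ω - 2 * (X₁ ω * X ω)) ∂P := by
      congr 1; funext ω; exact hsq ω
    have h1 : Integrable (fun ω => X₁ ω + X ω) P := hintgX₁.add hintgX
    have h2 : Integrable (fun ω => 2 * (X₁ ω * X ω)) P := hintgX₁X.const_mul 2
    rw [this, integral_sub h1 h2,
      integral_add hintgX₁ hintgX, MeasureTheory.integral_const_mul, hintX₁, hintX, hintX₁X]
  have hbV : 2 * b * (1 - μ₁) = V - (μ₁ - μ) + (μ₁ - μ) ^ 2 := by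
    rw [hb]; field_simp
  refine ⟨hb0, hbμ, ha0, haμ, hlt.le, hX₁01, hX01, hintX₁, hintX, hab, ?_⟩
  rw [hvar, hintD, hintD2, hab]
  linear_combination (-2 : ℝ) * habμ + hbV
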